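/- Let X be a topological space and f : X → X a continuous hypertransitive map. Then f is supermixing if and only if ⋃_{k=0}^∞ ⋂_{n=k}^∞ f^n(U) ≠ ∅ for every nonempty open set U ⊆ X. -/
import Mathlib

theorem stmt17 {X : Type*} [TopologicalSpace X] (f : X → X) (hcont : Continuous f)
    (hf : ∀ x : X, Dense (Set.range fun n : ℕ => f^[n] x)) :
    (∀ U : Set X, IsOpen U → U.Nonempty → Dense (⋃ k : ℕ, ⋂ n ≥ k, f^[n] '' U)) ↔
      ∀ U : Set X, IsOpen U → U.Nonempty → (⋃ k : ℕ, ⋂ n ≥ k, f^[n] '' U).Nonempty := by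
  constructor
  · intro h U hU hne
    obtain ⟨u, hu⟩ := hne
    have : Nonempty X := ⟨u⟩
    exact (h U hU ⟨u, hu⟩).nonempty
  · intro h U hU hne
    obtain ⟨x, hx⟩ := h U hU hne
    have key : ∀ n, f^[n] x ∈ ⋃ k : ℕ, ⋂ n ≥ k, f^[n] '' U := by
      intro n
      induction n with
      | zero => exact hx
      | succ n ih =>
        obtain ⟨k, hk⟩ := Set.mem_iUnion.mp ih
        refine Set.mem_iUnion.mpr ⟨k + 1, ?_⟩
        simp only [Set.mem_iInter] at hk ⊢
        intro m hm
        obtain ⟨u, hu, hu'⟩ := hk (m - 1) (by omega)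
        refine ⟨u, hu, ?_⟩
        rw [show m = (m - 1) + 1 by omega, Function.iterate_succ_apply',
          Function.iterate_succ_apply', hu']
    exact Dense.mono (Set.range_subset_iff.mpr key) (hf x)
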